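/- (Orthoplex bound, complex case) If φ_1,...,φ_n are unit vectors in ℂ^m with n > m², then max_{j≠l} |⟨φ_j, φ_l⟩| ≥ 1/√m. -/

import Mathlib

open scoped InnerProductSpace ComplexConjugate

/-- The coherence of a family of vectors: the supremum of absolute pairwise inner products. -/
noncomputable def coherence (𝕜 : Type*) {E : Type*} [RCLike 𝕜] [NormedAddCommGroup E]
    [InnerProductSpace 𝕜 E] {n : ℕ} (φ : Fin n → E) : ℝ :=
  sSup {r : ℝ | ∃ j l : Fin n, j ≠ l ∧ r = ‖(⟪φ j, φ l⟫_𝕜 : 𝕜)‖}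

lemma linearIndependent_of_pairwise_neg_inner {E : Type*} [NormedAddCommGroup E]
    [InnerProductSpace ℝ E] {ι : Type*} [Fintype ι] [DecidableEq ι] (v : ι → E) (i₀ : ι)
    (h : ∀ i j, i ≠ j → ⟪v i, v j⟫_ℝ < 0) :
    LinearIndependent ℝ (fun i : {i : ι // i ≠ i₀} => v i) := by
  rw [Fintype.linearIndependent_iff]
  intro g hg
  set P : Finset {i : ι // i ≠ i₀} := Finset.univ.filter (fun i => 0 < g i) with hP
  set N : Finset {i : ι // i ≠ i₀} := Finset.univ.filter (fun i => g i < 0) with hN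
  have hdisj : Disjoint P N := by
    simp only [Finset.disjoint_filter, hP, hN]
    intro x _ hx
    exact not_lt.2 hx.le
  have hsub : ∑ i ∈ P ∪ N, g i • v i = ∑ i : {i : ι // i ≠ i₀}, g i • v i :=
    Finset.sum_subset (Finset.subset_univ _) (by
      intro x _ hx
      simp only [hP, hN, Finset.mem_union, Finset.mem_filter, Finset.mem_univ, true_and,
        not_or, not_lt] at hx
      have : g x = 0 := le_antisymm hx.1 hx.2
      simp [this])
  have hsplit : (∑ i ∈ P, g i • v i) + ∑ i ∈ N, g i • v i = 0 := by
    rw [← Finset.sum_union hdisj, hsub, hg]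
  have hu2 : (∑ i ∈ P, g i • v i) = ∑ i ∈ N, (-(g i)) • v i := by
    have h1 : (∑ i ∈ P, g i • v i) = -∑ i ∈ N, g i • v i :=
      eq_neg_of_add_eq_zero_left hsplit
    rw [h1, ← Finset.sum_neg_distrib]
    simp [neg_smul]
  have hne : ∀ (i j : {i : ι // i ≠ i₀}), i ∈ P → j ∈ N → (i : ι) ≠ (j : ι) := by
    intro i j hi hj
    have : i ≠ j := fun hij => (Finset.disjoint_left.1 hdisj hi) (hij ▸ hj)
    exact fun hc => this (Subtype.ext hc)
  have hnn : ⟪(∑ i ∈ P, g i • v i), (∑ i ∈ P, g i • v i)⟫_ℝ ≤ 0 := by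
    nth_rewrite 2 [hu2]
    rw [sum_inner]
    apply Finset.sum_nonpos
    intro i hi
    rw [real_inner_smul_left, inner_sum]
    apply mul_nonpos_of_nonneg_of_nonpos
    · exact (Finset.mem_filter.1 hi).2.le
    · apply Finset.sum_nonpos
      intro j hj
      rw [real_inner_smul_right]
      apply mul_nonpos_of_nonneg_of_nonpos
      · exact neg_nonneg.2 (Finset.mem_filter.1 hj).2.le
      · exact (h _ _ (hne i j hi hj)).le
  have huz : (∑ i ∈ P, g i • v i) = 0 := by
    have := real_inner_self_nonpos.mp hnn
    exact this
  -- P empty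
  have hPempty : P = ∅ := by
    by_contra hPne
    have hPne' : P.Nonempty := Finset.nonempty_of_ne_empty hPne
    have h0 : ⟪(∑ i ∈ P, g i • v i), v i₀⟫_ℝ = 0 := by rw [huz, inner_zero_left]
    have hlt : ⟪(∑ i ∈ P, g i • v i), v i₀⟫_ℝ < 0 := by
      rw [sum_inner]
      apply Finset.sum_neg
      · intro i hi
        rw [real_inner_smul_left]
        exact mul_neg_of_pos_of_neg (Finset.mem_filter.1 hi).2 (h _ _ i.2)
      · exact hPne'
    linarith
  have hNempty : N = ∅ := by
    by_contra hNne
    have hNne' : N.Nonempty := Finset.nonempty_of_ne_empty hNne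
    have huz2 : (∑ i ∈ N, (-(g i)) • v i) = 0 := by rw [← hu2, huz]
    have h0 : ⟪(∑ i ∈ N, (-(g i)) • v i), v i₀⟫_ℝ = 0 := by rw [huz2, inner_zero_left]
    have hlt : ⟪(∑ i ∈ N, (-(g i)) • v i), v i₀⟫_ℝ < 0 := by
      rw [sum_inner]
      apply Finset.sum_neg
      · intro i hi
        rw [real_inner_smul_left]
        exact mul_neg_of_pos_of_neg (neg_pos.2 (Finset.mem_filter.1 hi).2) (h _ _ i.2)
      · exact hNne'
    linarith
  intro i
  rcases lt_trichotomy (g i) 0 with hlt | heq | hgt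
  · have : i ∈ N := Finset.mem_filter.2 ⟨Finset.mem_univ i, hlt⟩
    rw [hNempty] at this
    exact absurd this (Finset.notMem_empty i)
  · exact heq
  · have : i ∈ P := Finset.mem_filter.2 ⟨Finset.mem_univ i, hgt⟩
    rw [hPempty] at this
    exact absurd this (Finset.notMem_empty i)

variable (m n : ℕ) (φ : Fin n → EuclideanSpace ℂ (Fin m))

/-- Outer product vector. -/
noncomputable def Tm (j : Fin n) : EuclideanSpace ℂ (Fin m × Fin m) :=
  WithLp.toLp 2 (fun p : Fin m × Fin m => conj (φ j p.1) * φ j p.2)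

/-- The identity-matrix vector. -/
noncomputable def cm : EuclideanSpace ℂ (Fin m × Fin m) :=
  WithLp.toLp 2 (fun p : Fin m × Fin m => if p.1 = p.2 then 1 else 0)

lemma inner_Tm (j l : Fin n) :
    ⟪Tm m n φ j, Tm m n φ l⟫_ℂ = conj (⟪φ j, φ l⟫_ℂ) * ⟪φ j, φ l⟫_ℂ := by
  simp only [PiLp.inner_apply, RCLike.inner_apply, Tm, PiLp.toLp_apply]
  rw [Fintype.sum_prod_type, map_sum, Finset.sum_mul_sum]
  congr 1; funext a; congr 1; funext b
  simp only [map_mul, RingHom.id_apply, RCLike.star_def]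
  rw [Complex.conj_conj]
  ring

lemma inner_cm_Tm (j : Fin n) :
    ⟪cm m, Tm m n φ j⟫_ℂ = ⟪φ j, φ j⟫_ℂ := by
  simp only [PiLp.inner_apply, RCLike.inner_apply, Tm, cm, PiLp.toLp_apply]
  rw [Fintype.sum_prod_type]
  simp only [apply_ite conj, map_one, map_zero, ite_mul, one_mul, zero_mul]
  simp [Finset.sum_ite_eq, mul_comm]

lemma inner_cm_cm : ⟪cm m, cm m⟫_ℂ = (m : ℂ) := by
  simp only [PiLp.inner_apply, RCLike.inner_apply, cm, PiLp.toLp_apply]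
  rw [Fintype.sum_prod_type]
  simp [apply_ite conj, Finset.sum_ite_eq]

/-- Conjugate-transpose map, as a real-linear map. -/
noncomputable def sigmaMap : EuclideanSpace ℂ (Fin m × Fin m) →ₗ[ℝ]
    EuclideanSpace ℂ (Fin m × Fin m) where
  toFun x := WithLp.toLp 2 (fun p : Fin m × Fin m => conj (x (p.2, p.1)))
  map_add' x y := by ext p; simp [PiLp.add_apply]
  map_smul' r x := by
    ext p
    simp [PiLp.smul_apply, Complex.real_smul]

lemma sigmaMap_smul (z : ℂ) (x : EuclideanSpace ℂ (Fin m × Fin m)) :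
    sigmaMap m (z • x) = conj z • sigmaMap m x := by
  ext p
  simp [sigmaMap, PiLp.smul_apply, smul_eq_mul]

/-- Orthoplex bound (complex case): more than `m²` unit vectors in `ℂ^m` have coherence at
least `1/√m`. -/
theorem orthoplex_bound_complex (m n : ℕ) (hm : 0 < m) (hn : m ^ 2 < n)
    (φ : Fin n → EuclideanSpace ℂ (Fin m)) (hunit : ∀ j, ‖φ j‖ = 1) :
    coherence ℂ φ ≥ 1 / Real.sqrt m := by
  by_contra hcon
  push_neg at hcon
  classical
  have hbdd : BddAbove {r : ℝ | ∃ j l : Fin n, j ≠ l ∧ r = ‖(⟪φ j, φ l⟫_ℂ : ℂ)‖} := by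
    refine ⟨1, ?_⟩
    rintro r ⟨j, l, hjl, rfl⟩
    calc ‖(⟪φ j, φ l⟫_ℂ : ℂ)‖ ≤ ‖φ j‖ * ‖φ l‖ := norm_inner_le_norm _ _
    _ = 1 := by rw [hunit, hunit, mul_one]
  have hpair : ∀ j l : Fin n, j ≠ l → ‖(⟪φ j, φ l⟫_ℂ : ℂ)‖ < 1 / Real.sqrt m :=
    fun j l hjl => lt_of_le_of_lt (le_csSup hbdd ⟨j, l, hjl, rfl⟩) hcon
  have hm0 : (m : ℝ) ≠ 0 := Nat.cast_ne_zero.2 hm.ne'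
  have hmC : (m : ℂ) ≠ 0 := Nat.cast_ne_zero.2 hm.ne'
  have hφself : ∀ j, ⟪φ j, φ j⟫_ℂ = 1 := fun j => by
    rw [inner_self_eq_norm_sq_to_K, hunit]; norm_num
  set Q : Fin n → EuclideanSpace ℂ (Fin m × Fin m) :=
    fun j => Tm m n φ j - ((m : ℂ)⁻¹) • cm m with hQdef
  have key : ∀ j l, ⟪Q j, Q l⟫_ℂ
      = ((‖(⟪φ j, φ l⟫_ℂ : ℂ)‖ ^ 2 - (m : ℝ)⁻¹ : ℝ) : ℂ) := by
    intro j l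
    rw [hQdef]
    simp only [inner_sub_left, inner_sub_right, inner_smul_left, inner_smul_right,
      inner_Tm, inner_cm_cm, hφself]
    have h1 : ⟪Tm m n φ j, cm m⟫_ℂ = 1 := by
      rw [← inner_conj_symm, inner_cm_Tm, hφself, map_one]
    rw [h1, inner_cm_Tm, hφself, RCLike.conj_mul]
    simp only [map_inv₀, Complex.conj_natCast]
    push_cast
    field_simp
    simp only [sub_self, sub_zero]
    exact congrArg (fun x : ℂ => x - 1) (mul_comm _ _)
  have keyR : ∀ j l : Fin n, j ≠ l → ⟪Q j, Q l⟫_ℝ < 0 := by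
    intro j l hjl
    have hre : ⟪Q j, Q l⟫_ℝ = Complex.re ⟪Q j, Q l⟫_ℂ := by
      simp only [PiLp.inner_apply, Complex.inner, RCLike.inner_apply, Complex.re_sum]
    rw [hre, key j l, Complex.ofReal_re]
    have h2 : ‖(⟪φ j, φ l⟫_ℂ : ℂ)‖ ^ 2 < (1 / Real.sqrt m) ^ 2 := by
      apply pow_lt_pow_left₀ (hpair j l hjl) (norm_nonneg _)
      norm_num
    have h3 : (1 / Real.sqrt m) ^ 2 = (m : ℝ)⁻¹ := by
      rw [div_pow, one_pow, Real.sq_sqrt (Nat.cast_nonneg m), one_div]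
    linarith [h3 ▸ h2]
  have i₀ : Fin n := ⟨0, by omega⟩
  have hR : LinearIndependent ℝ (fun i : {i : Fin n // i ≠ i₀} => Q i) :=
    linearIndependent_of_pairwise_neg_inner Q i₀ keyR
  have hσQ : ∀ j, sigmaMap m (Q j) = Q j := by
    intro j
    ext p
    show conj (Q j (p.2, p.1)) = Q j p
    rw [hQdef]
    simp only [PiLp.sub_apply, PiLp.smul_apply, Tm, cm, PiLp.toLp_apply, smul_eq_mul, map_sub, map_mul,
      map_inv₀, Complex.conj_natCast, Complex.conj_conj]
    have : (if p.2 = p.1 then (1:ℂ) else 0) = (if p.1 = p.2 then (1:ℂ) else 0) := by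
      simp [eq_comm]
    rw [apply_ite conj, map_one, map_zero, this]
    ring_nf
  have hker : ∀ (g : {i : Fin n // i ≠ i₀} → ℂ),
      (∑ i, g i • Q i = 0) → ∀ i, (g i).re = 0 := by
    intro g hg i
    have h2 : ∑ i : {i : Fin n // i ≠ i₀}, conj (g i) • Q i = 0 := by
      have hσ := congrArg (sigmaMap m) hg
      rw [map_sum, map_zero] at hσ
      calc ∑ i : {i : Fin n // i ≠ i₀}, conj (g i) • Q i
          = ∑ i : {i : Fin n // i ≠ i₀}, sigmaMap m (g i • Q i) := by
            refine Finset.sum_congr rfl fun i _ => ?_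
            rw [sigmaMap_smul, hσQ]
        _ = 0 := hσ
    have h3 : ∑ i : {i : Fin n // i ≠ i₀}, ((2 * (g i).re : ℝ)) • Q i = 0 := by
      have h4 : ∑ i : {i : Fin n // i ≠ i₀}, (g i + conj (g i)) • Q i = 0 := by
        simp only [add_smul, Finset.sum_add_distrib, hg, h2, add_zero]
      calc ∑ i : {i : Fin n // i ≠ i₀}, ((2 * (g i).re : ℝ)) • Q i
          = ∑ i : {i : Fin n // i ≠ i₀}, (g i + conj (g i)) • Q i := by
            refine Finset.sum_congr rfl fun i _ => ?_
            rw [Complex.add_conj, ← Complex.coe_smul]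
        _ = 0 := h4
    have := (Fintype.linearIndependent_iff.mp hR) _ h3 i
    linarith
  have hC : LinearIndependent ℂ (fun i : {i : Fin n // i ≠ i₀} => Q i) := by
    rw [Fintype.linearIndependent_iff]
    intro g hg i
    have h1 : (g i).re = 0 := hker g hg i
    have hg2 : ∑ i : {i : Fin n // i ≠ i₀}, (Complex.I * g i) • Q i = 0 := by
      have := congrArg (fun x => (Complex.I) • x) hg
      simp only [Finset.smul_sum, smul_smul, smul_zero] at this
      exact this
    have h2 : (Complex.I * g i).re = 0 := hker _ hg2 i
    simp only [Complex.mul_re, Complex.I_re, Complex.I_im, zero_mul, one_mul,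
      zero_sub, neg_eq_zero] at h2
    exact Complex.ext h1 h2
  have hcQ : ∀ j, ⟪cm m, Q j⟫_ℂ = 0 := by
    intro j
    rw [hQdef]
    simp only [inner_sub_right, inner_smul_right, inner_cm_Tm, inner_cm_cm, hφself]
    field_simp
    simp
  have hmem : ∀ j, Q j ∈ (Submodule.span ℂ {cm m})ᗮ :=
    fun j => Submodule.mem_orthogonal_singleton_iff_inner_left.2
      (inner_eq_zero_symm.1 (hcQ j))
  set K := (Submodule.span ℂ {cm m})ᗮ with hK
  have hC' : LinearIndependent ℂ (fun i : {i : Fin n // i ≠ i₀} => (⟨Q i, hmem i⟩ : K)) :=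
    LinearIndependent.of_comp K.subtype hC
  have hcard : Fintype.card {i : Fin n // i ≠ i₀} ≤ Module.finrank ℂ K :=
    hC'.fintype_card_le_finrank
  have hcne : cm m ≠ 0 := by
    intro hc
    have : cm m (⟨0, hm⟩, ⟨0, hm⟩) = 0 := by rw [hc]; rfl
    simp [cm, PiLp.toLp_apply] at this
  have h1 : Module.finrank ℂ (Submodule.span ℂ {cm m}) = 1 := finrank_span_singleton hcne
  have h2 := Submodule.finrank_add_finrank_orthogonal (𝕜 := ℂ) (Submodule.span ℂ {cm m})
  rw [h1, finrank_euclideanSpace] at h2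
  simp only [Fintype.card_prod, Fintype.card_fin] at h2
  have hcard2 : Fintype.card {i : Fin n // i ≠ i₀} = n - 1 := by
    simp [Fintype.card_subtype_compl]
  have hsq : m ^ 2 = m * m := by ring
  rw [hsq] at hn
  rw [← hK] at h2
  rw [hcard2] at hcard
  omega
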